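/- Sequential-randomization reduction used in the recursive blipping proof: for every t = 1,…,T−1 and every fixed partial sequence z̄_t ∈ 𝒵^t, the composite control potential outcome Y(Z̄_t, z̲_{t+1}⁰), defined by ω ↦ Y(Z̄_t(ω), z⁰,…,z⁰)(ω), satisfies almost surely 𝔼[ Y(Z̄_t, z̲_{t+1}⁰) | σ(Z̄_{t+1}, X̄_t) ] = 𝔼[ Y(Z̄_t, z̲_{t+1}⁰) | 𝓖_t ]; that is, conditioning additionally on the next treatment Z_{t+1} does not change the conditional mean of the composite control potential outcome given the history 𝓖_t = σ(Z̄_t, X̄_t). -/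

import Mathlib

open MeasureTheory ProbabilityTheory MeasurableSpace Set

noncomputable section

/-- The σ-algebra generated by the treatments `Z 1, …, Z a` and the features `X 0, …, X b`.
With this notation, `σ(Z̄ₜ₊₁, X̄ₜ) = histSigma Z X (t+1) t` and `𝓖 t = histSigma Z X t t`. -/
def histSigma {Ω 𝒵 : Type*} [MeasurableSpace 𝒵] {d : ℕ}
    (Z : ℕ → Ω → 𝒵) (X : ℕ → Ω → Fin d → ℝ) (a b : ℕ) : MeasurableSpace Ω :=
  (⨆ s ∈ Finset.Icc 1 a, MeasurableSpace.comap (Z s) inferInstance) ⊔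
  (⨆ s ∈ Finset.Icc 0 b, MeasurableSpace.comap (X s) inferInstance)

/-- The length-`T` treatment sequence `(Z̄ₜ(ω), z̲ₜ₊₁⁰)` that agrees with the realized
treatments through time `t` and equals the control `z0` from time `t+1` onward
(coordinate `i : Fin T` corresponds to time `i + 1`). -/
def padCtrl {Ω 𝒵 : Type*} (Z : ℕ → Ω → 𝒵) (z0 : 𝒵) (T t : ℕ) (ω : Ω) : Fin T → 𝒵 :=
  fun i => if (i : ℕ) + 1 ≤ t then Z ((i : ℕ) + 1) ω else z0

lemma ae_indepFun_condExpKernel {Ω 𝒵 : Type*} {m : MeasurableSpace Ω}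
    [mΩ : MeasurableSpace Ω] [StandardBorelSpace Ω]
    [Nonempty Ω] (μ : Measure Ω) [IsProbabilityMeasure μ]
    [Fintype 𝒵] [m𝒵 : MeasurableSpace 𝒵] [MeasurableSingletonClass 𝒵]
    (hm : m ≤ mΩ)
    {W : Ω → 𝒵} (hW : Measurable W) {f : Ω → ℝ} (hf : Measurable f)
    (h : CondIndepFun m hm W f μ) :
    ∀ᵐ ω ∂μ, IndepFun W f (condExpKernel (mΩ := mΩ) μ m ω) := by
  have hall : ∀ B : Set 𝒵, MeasurableSet B := fun B => B.toFinite.measurableSet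
  have key : ∀ᵐ ω ∂μ, ∀ (z : 𝒵) (q : ℚ),
      condExpKernel (mΩ := mΩ) μ m ω ((W ⁻¹' {z}) ∩ (f ⁻¹' Iic (q : ℝ)))
        = condExpKernel (mΩ := mΩ) μ m ω (W ⁻¹' {z}) * condExpKernel (mΩ := mΩ) μ m ω (f ⁻¹' Iic (q : ℝ)) := by
    rw [ae_all_iff]
    intro z
    rw [ae_all_iff]
    intro q
    exact ae_of_ae_trim hm (h (W ⁻¹' {z}) (f ⁻¹' Iic (q : ℝ))
      ⟨{z}, hall _, rfl⟩ ⟨Iic (q : ℝ), measurableSet_Iic, rfl⟩)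
  filter_upwards [key] with ω hω
  set ν := condExpKernel (mΩ := mΩ) μ m ω
  have hp1 : IsPiSystem {s : Set Ω | ∃ z : 𝒵, s = W ⁻¹' {z}} := by
    rintro s ⟨z, rfl⟩ t ⟨z', rfl⟩ hne
    obtain ⟨x, hx1, hx2⟩ := hne
    simp only [mem_preimage, mem_singleton_iff] at hx1 hx2
    subst hx1
    rw [hx2] at *
    exact ⟨z', by simp⟩
  have hp2 : IsPiSystem {s : Set Ω | ∃ q : ℚ, s = f ⁻¹' Iic (q : ℝ)} := by
    rintro s ⟨q, rfl⟩ t ⟨q', rfl⟩ _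
    refine ⟨min q q', ?_⟩
    rw [← preimage_inter, Iic_inter_Iic]
    push_cast
    rfl
  have hgen1 : MeasurableSpace.comap W m𝒵 = generateFrom {s : Set Ω | ∃ z : 𝒵, s = W ⁻¹' {z}} := by
    refine le_antisymm ?_ (generateFrom_le ?_)
    · rintro s ⟨B, hB, rfl⟩
      have : W ⁻¹' B = ⋃ z ∈ B, W ⁻¹' {z} := by
        ext x; simp
      rw [this]
      exact MeasurableSet.biUnion B.to_countable
        (fun z _ => measurableSet_generateFrom ⟨z, rfl⟩)
    · rintro s ⟨z, rfl⟩
      exact ⟨{z}, hall _, rfl⟩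
  have hgen2 : MeasurableSpace.comap f inferInstance
      = generateFrom {s : Set Ω | ∃ q : ℚ, s = f ⁻¹' Iic (q : ℝ)} := by
    conv_lhs => rw [show (inferInstance : MeasurableSpace ℝ) = borel ℝ from rfl,
      Real.borel_eq_generateFrom_Iic_rat, MeasurableSpace.comap_generateFrom]
    congr 1
    ext s
    simp only [mem_image, mem_iUnion, mem_singleton_iff, mem_setOf_eq]
    constructor
    · rintro ⟨t, ⟨q, rfl⟩, rfl⟩; exact ⟨q, rfl⟩
    · rintro ⟨q, rfl⟩; exact ⟨Iic (q : ℝ), ⟨q, rfl⟩, rfl⟩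
  have hind : ProbabilityTheory.Indep (MeasurableSpace.comap W m𝒵)
      (MeasurableSpace.comap f inferInstance) ν := by
    refine IndepSets.indep (μ := ν)
      hW.comap_le hf.comap_le hp1 hp2 hgen1 hgen2 ?_
    rintro t1 t2 ⟨z, rfl⟩ ⟨q, rfl⟩
    exact Filter.Eventually.of_forall fun a => by simpa [Kernel.const_apply] using hω z q
  exact hind

lemma condexp_indicator_mul_of_condIndepFun {Ω 𝒵 : Type*} {m : MeasurableSpace Ω}
    [mΩ : MeasurableSpace Ω] [StandardBorelSpace Ω]
    [Nonempty Ω] (μ : Measure Ω) [IsProbabilityMeasure μ]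
    [Fintype 𝒵] [m𝒵 : MeasurableSpace 𝒵] [MeasurableSingletonClass 𝒵]
    (hm : m ≤ mΩ)
    {W : Ω → 𝒵} (hW : Measurable W) {f : Ω → ℝ} (hf : Measurable f)
    (hfi : Integrable f μ) (h : CondIndepFun m hm W f μ) (B : Set 𝒵) :
    μ[(W ⁻¹' B).indicator f | m]
      =ᵐ[μ] fun ω => (μ⟦W ⁻¹' B | m⟧) ω * (μ[f | m]) ω := by
  have hB : MeasurableSet B := B.toFinite.measurableSet
  have ht : MeasurableSet (W ⁻¹' B) := hW hB
  have h1 := condExp_ae_eq_integral_condExpKernel (mΩ := mΩ) hm (hfi.indicator ht)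
  have h2 := condExp_ae_eq_integral_condExpKernel (mΩ := mΩ) hm hfi
  have h3 := condExpKernel_ae_eq_condExp (mΩ := mΩ) (μ := μ) hm ht
  have h4 : ∀ᵐ ω ∂μ, Integrable f (condExpKernel (mΩ := mΩ) μ m ω) := hfi.condExpKernel_ae (m := m)
  have h5 := ae_indepFun_condExpKernel μ hm hW hf h
  filter_upwards [h1, h2, h3, h4, h5] with ω e1 e2 e3 e4 e5
  rw [e1]
  set ν := condExpKernel (mΩ := mΩ) μ m ω with hν
  have hXind : IndepFun ((B.indicator (fun _ => (1:ℝ))) ∘ W) f ν :=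
    e5.comp (measurable_const.indicator hB) measurable_id
  have hXint : Integrable ((B.indicator (fun _ => (1:ℝ))) ∘ W) ν := by
    have : ((B.indicator (fun _ => (1:ℝ))) ∘ W) = (W ⁻¹' B).indicator (fun _ => (1:ℝ)) := by
      ext x
      by_cases hx : W x ∈ B <;> simp [Set.indicator_apply, hx]
    rw [this]
    exact (integrable_const _).indicator ht
  have hprod : (W ⁻¹' B).indicator f
      = ((B.indicator (fun _ => (1:ℝ))) ∘ W) * f := by
    ext y
    by_cases hy : W y ∈ B <;> simp [Set.indicator_apply, hy]
  have hmul : ∫ y, (W ⁻¹' B).indicator f y ∂ν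
      = (∫ y, ((B.indicator (fun _ => (1:ℝ))) ∘ W) y ∂ν) * ∫ y, f y ∂ν := by
    rw [show (fun y => (W ⁻¹' B).indicator f y) = (W ⁻¹' B).indicator f from rfl, hprod]
    exact IndepFun.integral_mul_eq_mul_integral hXind hXint.aestronglyMeasurable e4.aestronglyMeasurable
  rw [hmul]
  have hX1 : ∫ y, ((B.indicator (fun _ => (1:ℝ))) ∘ W) y ∂ν = ν.real (W ⁻¹' B) := by
    have : ((B.indicator (fun _ => (1:ℝ))) ∘ W) = (W ⁻¹' B).indicator (fun _ => (1:ℝ)) := by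
      ext x
      by_cases hx : W x ∈ B <;> simp [Set.indicator_apply, hx]
    rw [this]
    exact integral_indicator_one (μ := ν) ht
  rw [hX1, e3, ← e2]

lemma condexp_sup_comap_of_condIndepFun {Ω 𝒵 : Type*} {m : MeasurableSpace Ω}
    [mΩ : MeasurableSpace Ω] [StandardBorelSpace Ω]
    [Nonempty Ω] (μ : Measure Ω) [IsProbabilityMeasure μ]
    [Fintype 𝒵] [m𝒵 : MeasurableSpace 𝒵] [MeasurableSingletonClass 𝒵]
    (hm : m ≤ mΩ)
    {W : Ω → 𝒵} (hW : Measurable W) {f : Ω → ℝ} (hf : Measurable f)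
    (hfi : Integrable f μ) (h : CondIndepFun m hm W f μ) :
    μ[f | m ⊔ MeasurableSpace.comap W m𝒵] =ᵐ[μ] μ[f | m] := by
  have hc : MeasurableSpace.comap W m𝒵 ≤ mΩ := hW.comap_le
  have hsup : m ⊔ MeasurableSpace.comap W m𝒵 ≤ mΩ := sup_le hm hc
  set C : Set (Set Ω) :=
    {A | ∃ (s : Set Ω) (B : Set 𝒵), MeasurableSet[m] s ∧ A = s ∩ W ⁻¹' B} with hC
  have hpi : IsPiSystem C := by
    rintro A ⟨s, B, hs, rfl⟩ A' ⟨s', B', hs', rfl⟩ _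
    exact ⟨s ∩ s', B ∩ B', hs.inter hs', by rw [Set.preimage_inter]; ext x; simp; tauto⟩
  have hgen : m ⊔ MeasurableSpace.comap W m𝒵 = MeasurableSpace.generateFrom C := by
    refine le_antisymm (sup_le ?_ ?_) (MeasurableSpace.generateFrom_le ?_)
    · intro s hs
      exact MeasurableSpace.measurableSet_generateFrom ⟨s, Set.univ, hs, by simp⟩
    · rintro A ⟨B, hB, rfl⟩
      exact MeasurableSpace.measurableSet_generateFrom ⟨Set.univ, B, MeasurableSet.univ, by simp⟩
    · rintro A ⟨s, B, hs, rfl⟩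
      have h1 : MeasurableSet[m ⊔ MeasurableSpace.comap W m𝒵] s :=
        (le_sup_left : m ≤ _) s hs
      have h2 : MeasurableSet[m ⊔ MeasurableSpace.comap W m𝒵] (W ⁻¹' B) :=
        (le_sup_right : MeasurableSpace.comap W m𝒵 ≤ _) _ ⟨B, B.toFinite.measurableSet, rfl⟩
      exact h1.inter h2
  -- the key set-integral identity on the π-system
  have hbasic : ∀ A ∈ C, ∫ x in A, (μ[f | m]) x ∂μ = ∫ x in A, f x ∂μ := by
    rintro A ⟨s, B, hs, rfl⟩
    have ht : MeasurableSet (W ⁻¹' B) := hW B.toFinite.measurableSet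
    have hind := condexp_indicator_mul_of_condIndepFun μ hm hW hf hfi h B
    have hl : ∫ x in s ∩ W ⁻¹' B, f x ∂μ = ∫ x in s, (W ⁻¹' B).indicator f x ∂μ := by
      rw [setIntegral_indicator ht]
    have hr : ∫ x in s ∩ W ⁻¹' B, (μ[f | m]) x ∂μ
        = ∫ x in s, (W ⁻¹' B).indicator (μ[f | m]) x ∂μ := by
      rw [setIntegral_indicator ht]
    rw [hl, hr]
    rw [← setIntegral_condExp hm (hfi.indicator ht) hs,
        ← setIntegral_condExp hm (integrable_condExp.indicator ht) hs]
    -- pull-out for the indicator of `W ⁻¹' B` against the `m`-measurable `μ[f|m]`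
    have hpull : μ[(μ[f | m]) * ((W ⁻¹' B).indicator (fun _ => (1:ℝ))) | m]
        =ᵐ[μ] (μ[f | m]) * μ[(W ⁻¹' B).indicator (fun _ => (1:ℝ)) | m] := by
      refine condExp_mul_of_stronglyMeasurable_left stronglyMeasurable_condExp ?_ ?_
      · have : (μ[f | m]) * ((W ⁻¹' B).indicator (fun _ => (1:ℝ)))
            = (W ⁻¹' B).indicator (μ[f | m]) := by
          ext x
          by_cases hx : x ∈ W ⁻¹' B <;> simp [Set.indicator_apply, hx]
        rw [this]
        exact integrable_condExp.indicator ht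
      · exact (integrable_const _).indicator ht
    have hind' : μ[(W ⁻¹' B).indicator (μ[f | m]) | m]
        =ᵐ[μ] μ[(W ⁻¹' B).indicator f | m] := by
      have e1 : (W ⁻¹' B).indicator (μ[f | m])
          = (μ[f | m]) * ((W ⁻¹' B).indicator (fun _ => (1:ℝ))) := by
        ext x
        by_cases hx : x ∈ W ⁻¹' B <;> simp [Set.indicator_apply, hx]
      rw [e1]
      refine hpull.trans ?_
      refine Filter.EventuallyEq.trans ?_ hind.symm
      exact Filter.Eventually.of_forall fun ω => mul_comm _ _
    exact setIntegral_congr_ae (hm s hs) (hind'.mono fun x hx _ => hx)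
  have hall : ∀ A, MeasurableSet[m ⊔ MeasurableSpace.comap W m𝒵] A →
      ∫ x in A, (μ[f | m]) x ∂μ = ∫ x in A, f x ∂μ := by
    intro A hA
    refine MeasurableSpace.induction_on_inter (m := m ⊔ MeasurableSpace.comap W m𝒵)
      (C := fun A _ => ∫ x in A, (μ[f | m]) x ∂μ = ∫ x in A, f x ∂μ) (s := C)
      hgen hpi ?_ hbasic ?_ ?_ A hA
    · simp
    · intro t htm ht
      have htm' : MeasurableSet t := hsup t htm
      have h1 := integral_add_compl htm' (integrable_condExp (f := f) (m := m) (μ := μ))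
      have h2 := integral_add_compl htm' hfi
      have h3 : ∫ x, (μ[f | m]) x ∂μ = ∫ x, f x ∂μ := integral_condExp (μ := μ) (f := f) hm
      linarith
    · intro g hdisj hgm hg
      have hgm' : ∀ i, MeasurableSet (g i) := fun i => hsup _ (hgm i)
      rw [integral_iUnion hgm' hdisj integrable_condExp.integrableOn,
        integral_iUnion hgm' hdisj hfi.integrableOn]
      exact tsum_congr hg
  exact (ae_eq_condExp_of_forall_setIntegral_eq hsup hfi
    (fun s _ _ => integrable_condExp.integrableOn)
    (fun s hs _ => hall s hs)
    (StronglyMeasurable.aestronglyMeasurable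
      (stronglyMeasurable_condExp.mono le_sup_left))).symm

/-- **Sequential-randomization reduction** used in the recursive blipping proof: for every
`t = 1, …, T−1`, the composite control potential outcome `Y(Z̄ₜ, z̲ₜ₊₁⁰)`, i.e.
`ω ↦ Y(Z̄ₜ(ω), z⁰, …, z⁰)(ω)`, satisfies almost surely
`𝔼[Y(Z̄ₜ, z̲ₜ₊₁⁰) | σ(Z̄ₜ₊₁, X̄ₜ)] = 𝔼[Y(Z̄ₜ, z̲ₜ₊₁⁰) | 𝓖ₜ]`. -/
theorem sequential_randomization_reduction
    {Ω : Type*} [MeasurableSpace Ω] [StandardBorelSpace Ω] [Nonempty Ω]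
    (μ : Measure Ω) [IsProbabilityMeasure μ]
    {𝒵 : Type*} [Fintype 𝒵] [DecidableEq 𝒵] [MeasurableSpace 𝒵] [MeasurableSingletonClass 𝒵]
    (z0 : 𝒵) {d : ℕ} (T : ℕ) (hT : 1 ≤ T)
    (Z : ℕ → Ω → 𝒵) (hZ : ∀ t, Measurable (Z t))
    (X : ℕ → Ω → Fin d → ℝ) (hX : ∀ t, Measurable (X t))
    (Ypot : (Fin T → 𝒵) → Ω → ℝ) (hYpot_int : ∀ zbar, Integrable (Ypot zbar) μ)
    (hYpot_meas : ∀ zbar, Measurable (Ypot zbar))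
    -- Sequential randomization: `Z_{t+1} ⫫ Y(z̄_T) | 𝓖ₜ` for `t = 1, …, T-1`
    (hGle : ∀ t, histSigma Z X t t ≤ ‹MeasurableSpace Ω›)
    (hseq : ∀ t, 1 ≤ t → t ≤ T - 1 → ∀ zbar : Fin T → 𝒵,
      CondIndepFun (histSigma Z X t t) (hGle t) (Z (t + 1)) (Ypot zbar) μ) :
    ∀ t, 1 ≤ t → t ≤ T - 1 →
      μ[fun ω => Ypot (padCtrl Z z0 T t ω) ω | histSigma Z X (t+1) t] =ᵐ[μ]
        μ[fun ω => Ypot (padCtrl Z z0 T t ω) ω | histSigma Z X t t] := by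
  intro t ht1 ht2
  -- split the larger σ-algebra
  have hsplit : histSigma Z X (t+1) t
      = histSigma Z X t t ⊔ MeasurableSpace.comap (Z (t+1)) inferInstance := by
    unfold histSigma
    have hIcc : Finset.Icc 1 (t+1) = insert (t+1) (Finset.Icc 1 t) := by
      ext s
      simp [Finset.mem_Icc, Finset.mem_insert]
      omega
    rw [hIcc, Finset.iSup_insert]
    rw [sup_assoc, sup_comm (MeasurableSpace.comap (Z (t+1)) inferInstance)]
  -- sub-σ-algebra facts
  have hZcomap : ∀ s, 1 ≤ s → s ≤ t → MeasurableSpace.comap (Z s) inferInstance ≤ histSigma Z X t t := by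
    intro s hs1 hs2
    refine le_trans ?_ (le_sup_left : _ ≤ histSigma Z X t t)
    exact le_iSup₂ (f := fun (r : ℕ) (_ : r ∈ Finset.Icc 1 t) =>
      MeasurableSpace.comap (Z r) inferInstance) s (Finset.mem_Icc.mpr ⟨hs1, hs2⟩)
  -- the partition events are measurable w.r.t. `m`
  have hAv : ∀ v : Fin T → 𝒵, MeasurableSet[histSigma Z X t t] {ω | padCtrl Z z0 T t ω = v} := by
    intro v
    have : {ω | padCtrl Z z0 T t ω = v} = ⋂ i : Fin T, {ω | padCtrl Z z0 T t ω i = v i} := by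
      ext ω
      simp [funext_iff, Set.mem_iInter]
    rw [this]
    refine MeasurableSet.iInter fun i => ?_
    by_cases h : (i : ℕ) + 1 ≤ t
    · have : {ω | padCtrl Z z0 T t ω i = v i} = Z ((i : ℕ) + 1) ⁻¹' {v i} := by
        ext ω; simp [padCtrl, show (i : ℕ) < t by omega]
      rw [this]
      exact hZcomap ((i : ℕ) + 1) (Nat.le_add_left 1 _) h _
        ⟨{v i}, MeasurableSet.singleton _, rfl⟩
    · have : {ω | padCtrl Z z0 T t ω i = v i} = {ω | z0 = v i} := by
        ext ω; simp [padCtrl, show ¬ (i : ℕ) < t by omega]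
      rw [this]
      by_cases hz : z0 = v i
      · simp only [hz, Set.setOf_true]; exact @MeasurableSet.univ Ω (histSigma Z X t t)
      · simp only [hz, Set.setOf_false]; exact @MeasurableSet.empty Ω (histSigma Z X t t)
  -- decompose the composite outcome as a finite sum over treatment sequences
  have hfun : (fun ω => Ypot (padCtrl Z z0 T t ω) ω)
      = ∑ v : Fin T → 𝒵, ({ω | padCtrl Z z0 T t ω = v}).indicator (Ypot v) := by
    funext ω
    rw [Finset.sum_apply]
    symm
    rw [Finset.sum_eq_single (padCtrl Z z0 T t ω)]
    · simp [Set.indicator_apply]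
    · intro v _ hv
      simp only [Set.indicator_apply, Set.mem_setOf_eq]
      rw [if_neg]
      intro hc
      exact hv (by rw [hc])
    · intro hmem
      exact absurd (Finset.mem_univ _) hmem
  have hint : ∀ v : Fin T → 𝒵,
      Integrable (({ω | padCtrl Z z0 T t ω = v}).indicator (Ypot v)) μ :=
    fun v => (hYpot_int v).indicator (hGle t _ (hAv v))
  -- the per-sequence reduction
  have hGle' : histSigma Z X (t+1) t ≤ ‹MeasurableSpace Ω› := by
    rw [hsplit]
    exact sup_le (hGle t) (hZ (t+1)).comap_le
  have hv : ∀ v : Fin T → 𝒵,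
      μ[({ω | padCtrl Z z0 T t ω = v}).indicator (Ypot v) | histSigma Z X (t+1) t]
        =ᵐ[μ] μ[({ω | padCtrl Z z0 T t ω = v}).indicator (Ypot v) | histSigma Z X t t] := by
    intro v
    have hcore : μ[Ypot v | histSigma Z X (t+1) t] =ᵐ[μ] μ[Ypot v | histSigma Z X t t] := by
      rw [hsplit]
      exact condexp_sup_comap_of_condIndepFun μ (hGle t) (hZ (t+1)) (hYpot_meas v)
        (hYpot_int v) (hseq t ht1 ht2 v)
    have hA' : MeasurableSet[histSigma Z X (t+1) t] {ω | padCtrl Z z0 T t ω = v} := by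
      rw [hsplit]
      exact (le_sup_left : histSigma Z X t t ≤ _) _ (hAv v)
    calc μ[({ω | padCtrl Z z0 T t ω = v}).indicator (Ypot v) | histSigma Z X (t+1) t]
        =ᵐ[μ] ({ω | padCtrl Z z0 T t ω = v}).indicator (μ[Ypot v | histSigma Z X (t+1) t]) :=
          condExp_indicator (hYpot_int v) hA'
      _ =ᵐ[μ] ({ω | padCtrl Z z0 T t ω = v}).indicator (μ[Ypot v | histSigma Z X t t]) := by
          filter_upwards [hcore] with ω hω
          simp only [Set.indicator_apply]
          split_ifs <;> simp [hω]
      _ =ᵐ[μ] μ[({ω | padCtrl Z z0 T t ω = v}).indicator (Ypot v) | histSigma Z X t t] :=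
          (condExp_indicator (hYpot_int v) (hAv v)).symm
  -- sum up
  rw [hfun]
  calc μ[∑ v : Fin T → 𝒵, ({ω | padCtrl Z z0 T t ω = v}).indicator (Ypot v)
        | histSigma Z X (t+1) t]
      =ᵐ[μ] ∑ v ∈ Finset.univ,
        μ[({ω | padCtrl Z z0 T t ω = v}).indicator (Ypot v) | histSigma Z X (t+1) t] :=
        condExp_finsetSum (fun v _ => hint v) (histSigma Z X (t+1) t)
    _ =ᵐ[μ] ∑ v ∈ Finset.univ,
        μ[({ω | padCtrl Z z0 T t ω = v}).indicator (Ypot v) | histSigma Z X t t] := by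
        have := ae_all_iff.mpr hv
        filter_upwards [this] with ω hω
        rw [Finset.sum_apply, Finset.sum_apply]
        exact Finset.sum_congr rfl fun v _ => hω v
    _ =ᵐ[μ] μ[∑ v : Fin T → 𝒵, ({ω | padCtrl Z z0 T t ω = v}).indicator (Ypot v) | histSigma Z X t t] :=
        (condExp_finsetSum (fun v _ => hint v) (histSigma Z X t t)).symm
end
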